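/- Let σ ∈ {naive, stb, stage, pref, sem} and let 𝕊 be an extension-set realized by some σ-compact AF (i.e., σ(F) = 𝕊 for some σ-compact F), and let K_{≥2}(𝕊) = {K_1, …, K_n} be the classes of K(𝕊) of size at least 2. Then there exist numbers p_1, …, p_n with p_i ∈ P^c_σ(|K_i|) for each i such that |𝕊| = p_1 · … · p_n. -/

import Mathlib

structure AF where
  A : Finset ℕ
  R : Set (ℕ × ℕ)
  R_sub : ∀ p ∈ R, p.1 ∈ A ∧ p.2 ∈ A

namespace AF

def cf (F : AF) : Set (Set ℕ) :=
  {S | S ⊆ ↑F.A ∧ ∀ a ∈ S, ∀ b ∈ S, (a, b) ∉ F.R}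

def defends (F : AF) (S : Set ℕ) (a : ℕ) : Prop :=
  ∀ b, (b, a) ∈ F.R → ∃ s ∈ S, (s, b) ∈ F.R

def adm (F : AF) : Set (Set ℕ) :=
  {S | S ∈ F.cf ∧ ∀ a ∈ S, F.defends S a}

def rng (F : AF) (S : Set ℕ) : Set ℕ :=
  S ∪ {b | ∃ s ∈ S, (s, b) ∈ F.R}

def naive (F : AF) : Set (Set ℕ) :=
  {S | S ∈ F.cf ∧ ∀ T ∈ F.cf, S ⊆ T → S = T}

def stb (F : AF) : Set (Set ℕ) :=
  {S | S ∈ F.cf ∧ ∀ a ∈ F.A, a ∉ S → ∃ s ∈ S, (s, a) ∈ F.R}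

def pref (F : AF) : Set (Set ℕ) :=
  {S | S ∈ F.adm ∧ ∀ T ∈ F.adm, S ⊆ T → S = T}

def stage (F : AF) : Set (Set ℕ) :=
  {S | S ∈ F.cf ∧ ¬ ∃ T ∈ F.cf, F.rng S ⊂ F.rng T}

def sem (F : AF) : Set (Set ℕ) :=
  {S | S ∈ F.adm ∧ ¬ ∃ T ∈ F.adm, F.rng S ⊂ F.rng T}

end AF

abbrev Semantics := AF → Set (Set ℕ)

def StandardSemantics : Set Semantics :=
  {AF.naive, AF.stb, AF.stage, AF.pref, AF.sem}

def AFCompact (σ : Semantics) (F : AF) : Prop :=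
  ∀ a ∈ F.A, ∃ S ∈ σ F, a ∈ S

def CAF (σ : Semantics) : Set AF := {F | AFCompact σ F}

def ArgS (𝕊 : Set (Set ℕ)) : Set ℕ := ⋃₀ 𝕊

def PairsS (𝕊 : Set (Set ℕ)) : Set (ℕ × ℕ) :=
  {p | ∃ S ∈ 𝕊, p.1 ∈ S ∧ p.2 ∈ S}

def IsExtensionSet (𝕊 : Set (Set ℕ)) : Prop := (ArgS 𝕊).Finite

def AFStep (F : AF) (a b : ℕ) : Prop := (a, b) ∈ F.R ∨ (b, a) ∈ F.R

def AFConnected (F : AF) : Prop :=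
  ∀ a ∈ F.A, ∀ b ∈ F.A, Relation.ReflTransGen (AFStep F) a b

def sameComp (F : AF) (a b : ℕ) : Prop := Relation.ReflTransGen (AFStep F) a b

def comps (F : AF) : Set (Set ℕ) :=
  {K | ∃ a ∈ F.A, K = {b ∈ (↑F.A : Set ℕ) | sameComp F a b}}

def nopairs (𝕊 : Set (Set ℕ)) (a b : ℕ) : Prop :=
  a ∈ ArgS 𝕊 ∧ b ∈ ArgS 𝕊 ∧ (a, b) ∉ PairsS 𝕊

def compsS (𝕊 : Set (Set ℕ)) : Set (Set ℕ) :=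
  {K | ∃ a ∈ ArgS 𝕊, K = {b ∈ ArgS 𝕊 | Relation.ReflTransGen (nopairs 𝕊) a b}}

noncomputable def sigmaMax (σ : Semantics) (n : ℕ) : ℕ :=
  sSup {k | ∃ F : AF, F.A.card = n ∧ (σ F).ncard = k}

noncomputable def sigmaMaxCon (σ : Semantics) (n : ℕ) : ℕ :=
  sSup {k | ∃ F : AF, F.A.card = n ∧ AFConnected F ∧ (σ F).ncard = k}

noncomputable def sigmaMax2 (σ : Semantics) (n : ℕ) : ℕ :=
  sSup ({k | ∃ F : AF, F.A.card = n ∧ (σ F).ncard = k} \ {sigmaMax σ n})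

def cfSet (𝕊 : Set (Set ℕ)) : Set (Set ℕ) :=
  {S | S ⊆ ArgS 𝕊 ∧ ∀ a ∈ S, ∀ b ∈ S, (a, b) ∈ PairsS 𝕊}

def plusSet (𝕊 : Set (Set ℕ)) : Set (Set ℕ) :=
  {S | S ∈ cfSet 𝕊 ∧ ∀ T ∈ cfSet 𝕊, S ⊆ T → S = T}

def minusSet (𝕊 : Set (Set ℕ)) : Set (Set ℕ) := plusSet 𝕊 \ 𝕊

def Sig (σ : Semantics) : Set (Set (Set ℕ)) := {𝕊 | ∃ F : AF, σ F = 𝕊}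

def cSig (σ : Semantics) : Set (Set (Set ℕ)) :=
  {𝕊 | ∃ F : AF, AFCompact σ F ∧ σ F = 𝕊}

def Pcon (σ : Semantics) (n : ℕ) : Set ℕ :=
  {k | ∃ F : AF, AFCompact σ F ∧ AFConnected F ∧ F.A.card = n ∧ (σ F).ncard = k}

open Classical in
noncomputable def restrictAF (F : AF) (K : Set ℕ) : AF where
  A := F.A.filter (fun a => a ∈ K)
  R := {p | p ∈ F.R ∧ p.1 ∈ K ∧ p.2 ∈ K}
  R_sub := fun p hp => by
    have h := F.R_sub p hp.1
    simp only [Finset.mem_filter]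
    exact ⟨⟨h.1, hp.2.1⟩, ⟨h.2, hp.2.2⟩⟩

def IsExclusionMapping (𝕊 : Set (Set ℕ)) (Rm : Set (ℕ × ℕ)) : Prop :=
  ∃ f : Set ℕ → ℕ,
    (∀ S ∈ minusSet 𝕊, f S ∈ ArgS 𝕊 ∧ f S ∉ S) ∧
    Rm = {p | ∃ S ∈ minusSet 𝕊, p.1 ∈ S ∧ p.2 = f S ∧ p ∉ PairsS 𝕊}

def Independent (𝕊 : Set (Set ℕ)) : Prop :=
  ∃ Rm : Set (ℕ × ℕ), IsExclusionMapping 𝕊 Rm ∧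
    (∀ a b, (a, b) ∈ Rm → (b, a) ∈ Rm → a = b) ∧
    ∀ S ∈ 𝕊, ∀ a ∈ ArgS 𝕊 \ S, ∃ s ∈ S, (s, a) ∉ Rm ∪ PairsS 𝕊

def ConflictExplicit (σ : Semantics) (F : AF) : Prop :=
  ∀ a ∈ F.A, ∀ b ∈ F.A, (a, b) ∉ PairsS (σ F) → (a, b) ∈ F.R ∨ (b, a) ∈ F.R

noncomputable def canonicalCF (𝕊 : Set (Set ℕ)) (h : IsExtensionSet 𝕊) : AF where
  A := h.toFinset
  R := {p | p.1 ∈ ArgS 𝕊 ∧ p.2 ∈ ArgS 𝕊 ∧ p ∉ PairsS 𝕊}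
  R_sub := fun p hp => by
    exact ⟨(Set.Finite.mem_toFinset (s := ArgS 𝕊) h).2 hp.1,
      (Set.Finite.mem_toFinset (s := ArgS 𝕊) h).2 hp.2.1⟩

section AuxSplit
open AF Set

def closedIn (F : AF) (C : Set ℕ) : Prop := ∀ p ∈ F.R, (p.1 ∈ C ↔ p.2 ∈ C)

lemma closedIn.compl {F : AF} {C : Set ℕ} (h : closedIn F C) : closedIn F Cᶜ := by
  intro p hp
  simp only [Set.mem_compl_iff]
  exact not_congr (h p hp)

lemma mem_restrict_A {F : AF} {C : Set ℕ} {a : ℕ} :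
    a ∈ (restrictAF F C).A ↔ a ∈ F.A ∧ a ∈ C := by
  simp [restrictAF]

lemma mem_restrict_R {F : AF} {C : Set ℕ} {p : ℕ × ℕ} :
    p ∈ (restrictAF F C).R ↔ p ∈ F.R ∧ p.1 ∈ C ∧ p.2 ∈ C := Iff.rfl

lemma restrict_cf_sub {F : AF} {C S : Set ℕ} (h : S ∈ (restrictAF F C).cf) : S ⊆ C :=
  fun x hx => (mem_restrict_A.1 (h.1 hx)).2

lemma cf_proj {F : AF} {C S : Set ℕ} (h : S ∈ F.cf) :
    S ∩ C ∈ (restrictAF F C).cf := by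
  refine ⟨fun x hx => mem_restrict_A.2 ⟨h.1 hx.1, hx.2⟩, ?_⟩
  intro a ha b hb hR
  exact h.2 a ha.1 b hb.1 hR.1

lemma cf_glue {F : AF} {C S : Set ℕ} (hC : closedIn F C)
    (h1 : S ∩ C ∈ (restrictAF F C).cf) (h2 : S ∩ Cᶜ ∈ (restrictAF F Cᶜ).cf) :
    S ∈ F.cf := by
  constructor
  · intro x hx
    by_cases hxC : x ∈ C
    · exact Finset.mem_coe.2 (mem_restrict_A.1 (h1.1 ⟨hx, hxC⟩)).1
    · exact Finset.mem_coe.2 (mem_restrict_A.1 (h2.1 ⟨hx, hxC⟩)).1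
  · intro a ha b hb hR
    by_cases haC : a ∈ C
    · have hbC : b ∈ C := (hC (a, b) hR).1 haC
      exact h1.2 a ⟨ha, haC⟩ b ⟨hb, hbC⟩ ⟨hR, haC, hbC⟩
    · have hbC : b ∉ C := fun hb' => haC ((hC (a, b) hR).2 hb')
      exact h2.2 a ⟨ha, haC⟩ b ⟨hb, hbC⟩ ⟨hR, haC, hbC⟩

lemma cf_split {F : AF} {C : Set ℕ} (hC : closedIn F C) (S : Set ℕ) :
    S ∈ F.cf ↔ S ∩ C ∈ (restrictAF F C).cf ∧ S ∩ Cᶜ ∈ (restrictAF F Cᶜ).cf :=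
  ⟨fun h => ⟨cf_proj h, cf_proj h⟩, fun h => cf_glue hC h.1 h.2⟩

lemma adm_proj {F : AF} {C S : Set ℕ} (hC : closedIn F C) (h : S ∈ F.adm) :
    S ∩ C ∈ (restrictAF F C).adm := by
  refine ⟨cf_proj h.1, ?_⟩
  intro a ha b hb
  obtain ⟨hbR, hbC, haC⟩ := hb
  obtain ⟨s, hs, hsb⟩ := h.2 a ha.1 b hbR
  have hsC : s ∈ C := (hC (s, b) hsb).2 hbC
  exact ⟨s, ⟨hs, hsC⟩, hsb, hsC, hbC⟩

lemma adm_glue {F : AF} {C S : Set ℕ} (hC : closedIn F C)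
    (h1 : S ∩ C ∈ (restrictAF F C).adm) (h2 : S ∩ Cᶜ ∈ (restrictAF F Cᶜ).adm) :
    S ∈ F.adm := by
  refine ⟨cf_glue hC h1.1 h2.1, ?_⟩
  intro a ha b hbR
  by_cases haC : a ∈ C
  · have hbC : b ∈ C := (hC (b, a) hbR).2 haC
    obtain ⟨s, hs, hsb⟩ := h1.2 a ⟨ha, haC⟩ b ⟨hbR, hbC, haC⟩
    exact ⟨s, hs.1, hsb.1⟩
  · have hbC : b ∉ C := fun hb' => haC ((hC (b, a) hbR).1 hb')
    obtain ⟨s, hs, hsb⟩ := h2.2 a ⟨ha, haC⟩ b ⟨hbR, hbC, haC⟩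
    exact ⟨s, hs.1, hsb.1⟩

lemma adm_split {F : AF} {C : Set ℕ} (hC : closedIn F C) (S : Set ℕ) :
    S ∈ F.adm ↔ S ∩ C ∈ (restrictAF F C).adm ∧ S ∩ Cᶜ ∈ (restrictAF F Cᶜ).adm :=
  ⟨fun h => ⟨adm_proj hC h, adm_proj hC.compl h⟩, fun h => adm_glue hC h.1 h.2⟩

lemma rng_proj {F : AF} {C : Set ℕ} (hC : closedIn F C) (S : Set ℕ) :
    (restrictAF F C).rng (S ∩ C) = F.rng S ∩ C := by
  ext b
  simp only [AF.rng, Set.mem_union, Set.mem_setOf_eq, Set.mem_inter_iff]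
  constructor
  · rintro (hb | ⟨s, hs, hsb⟩)
    · exact ⟨Or.inl hb.1, hb.2⟩
    · exact ⟨Or.inr ⟨s, hs.1, hsb.1⟩, hsb.2.2⟩
  · rintro ⟨hb | ⟨s, hs, hsb⟩, hbC⟩
    · exact Or.inl ⟨hb, hbC⟩
    · have hsC : s ∈ C := (hC (s, b) hsb).2 hbC
      exact Or.inr ⟨s, ⟨hs, hsC⟩, hsb, hsC, hbC⟩

lemma stb_proj {F : AF} {C S : Set ℕ} (hC : closedIn F C) (h : S ∈ F.stb) :
    S ∩ C ∈ (restrictAF F C).stb := by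
  refine ⟨cf_proj h.1, ?_⟩
  intro a ha hna
  obtain ⟨haA, haC⟩ := mem_restrict_A.1 ha
  have haS : a ∉ S := fun h' => hna ⟨h', haC⟩
  obtain ⟨s, hs, hsa⟩ := h.2 a haA haS
  have hsC : s ∈ C := (hC (s, a) hsa).2 haC
  exact ⟨s, ⟨hs, hsC⟩, hsa, hsC, haC⟩

lemma stb_glue {F : AF} {C S : Set ℕ} (hC : closedIn F C)
    (h1 : S ∩ C ∈ (restrictAF F C).stb) (h2 : S ∩ Cᶜ ∈ (restrictAF F Cᶜ).stb) :
    S ∈ F.stb := by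
  refine ⟨cf_glue hC h1.1 h2.1, ?_⟩
  intro a haA haS
  by_cases haC : a ∈ C
  · obtain ⟨s, hs, hsa⟩ := h1.2 a (mem_restrict_A.2 ⟨haA, haC⟩) (fun h' => haS h'.1)
    exact ⟨s, hs.1, hsa.1⟩
  · obtain ⟨s, hs, hsa⟩ := h2.2 a (mem_restrict_A.2 ⟨haA, haC⟩) (fun h' => haS h'.1)
    exact ⟨s, hs.1, hsa.1⟩

lemma stb_split {F : AF} {C : Set ℕ} (hC : closedIn F C) (S : Set ℕ) :
    S ∈ F.stb ↔ S ∩ C ∈ (restrictAF F C).stb ∧ S ∩ Cᶜ ∈ (restrictAF F Cᶜ).stb :=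
  ⟨fun h => ⟨stb_proj hC h, stb_proj hC.compl h⟩, fun h => stb_glue hC h.1 h.2⟩

end AuxSplit

section AuxGeneric
open Set

lemma inter_piece {C D : Set ℕ} (huniv : C ∪ D = Set.univ) (S : Set ℕ) :
    S ∩ C ∪ S ∩ D = S := by
  rw [← Set.inter_union_distrib_left, huniv, Set.inter_univ]

lemma union_inter_eq_left {T1 T2 C D : Set ℕ} (hdisj : C ∩ D = ∅)
    (h1 : T1 ⊆ C) (h2 : T2 ⊆ D) : (T1 ∪ T2) ∩ C = T1 := by
  rw [Set.union_inter_distrib_right, Set.inter_eq_self_of_subset_left h1]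
  have h3 : T2 ∩ C = ∅ := by
    apply Set.eq_empty_iff_forall_notMem.2
    intro x hx
    exact (Set.eq_empty_iff_forall_notMem.1 hdisj x) ⟨hx.2, h2 hx.1⟩
  rw [h3, Set.union_empty]

lemma union_inter_eq_right {T1 T2 C D : Set ℕ} (hdisj : C ∩ D = ∅)
    (h1 : T1 ⊆ C) (h2 : T2 ⊆ D) : (T1 ∪ T2) ∩ D = T2 := by
  rw [Set.union_comm]
  exact union_inter_eq_left (by rw [Set.inter_comm]; exact hdisj) h2 h1

lemma max_proj {C D : Set ℕ} {P Q1 Q2 : Set (Set ℕ)} {S : Set ℕ}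
    (huniv : C ∪ D = Set.univ) (hdisj : C ∩ D = ∅)
    (hsplit : ∀ T : Set ℕ, T ∈ P ↔ T ∩ C ∈ Q1 ∧ T ∩ D ∈ Q2)
    (hsub1 : ∀ T ∈ Q1, T ⊆ C) (hsub2 : ∀ T ∈ Q2, T ⊆ D)
    (hS : S ∈ P) (hmax : ∀ T ∈ P, S ⊆ T → S = T) :
    S ∩ C ∈ Q1 ∧ ∀ T ∈ Q1, S ∩ C ⊆ T → S ∩ C = T := by
  have h1 := (hsplit S).1 hS
  refine ⟨h1.1, fun T hT hST => ?_⟩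
  set U := T ∪ S ∩ D with hU
  have hUC : U ∩ C = T := union_inter_eq_left hdisj (hsub1 T hT) Set.inter_subset_right
  have hUD : U ∩ D = S ∩ D := union_inter_eq_right hdisj (hsub1 T hT) Set.inter_subset_right
  have hUP : U ∈ P := (hsplit U).2 ⟨by rw [hUC]; exact hT, by rw [hUD]; exact h1.2⟩
  have hSU : S ⊆ U := by
    intro s hs
    have : s ∈ S ∩ C ∪ S ∩ D := by rw [inter_piece huniv]; exact hs
    rcases this with h | h
    · exact Or.inl (hST h)
    · exact Or.inr h
  have := hmax U hUP hSU
  rw [this, hUC]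

lemma max_glue {C D : Set ℕ} {P Q1 Q2 : Set (Set ℕ)} {S : Set ℕ}
    (huniv : C ∪ D = Set.univ)
    (hsplit : ∀ T : Set ℕ, T ∈ P ↔ T ∩ C ∈ Q1 ∧ T ∩ D ∈ Q2)
    (h1 : S ∩ C ∈ Q1 ∧ ∀ T ∈ Q1, S ∩ C ⊆ T → S ∩ C = T)
    (h2 : S ∩ D ∈ Q2 ∧ ∀ T ∈ Q2, S ∩ D ⊆ T → S ∩ D = T) :
    S ∈ P ∧ ∀ T ∈ P, S ⊆ T → S = T := by
  refine ⟨(hsplit S).2 ⟨h1.1, h2.1⟩, fun T hT hST => ?_⟩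
  have hTp := (hsplit T).1 hT
  have e1 := h1.2 (T ∩ C) hTp.1 (Set.inter_subset_inter_left C hST)
  have e2 := h2.2 (T ∩ D) hTp.2 (Set.inter_subset_inter_left D hST)
  calc S = S ∩ C ∪ S ∩ D := (inter_piece huniv S).symm
    _ = T ∩ C ∪ T ∩ D := by rw [e1, e2]
    _ = T := inter_piece huniv T

lemma rngmax_proj {C D : Set ℕ} {P Q1 Q2 : Set (Set ℕ)} {r r1 r2 : Set ℕ → Set ℕ} {S : Set ℕ}
    (huniv : C ∪ D = Set.univ) (hdisj : C ∩ D = ∅)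
    (hsplit : ∀ T : Set ℕ, T ∈ P ↔ T ∩ C ∈ Q1 ∧ T ∩ D ∈ Q2)
    (hsub1 : ∀ T ∈ Q1, T ⊆ C) (hsub2 : ∀ T ∈ Q2, T ⊆ D)
    (hr1 : ∀ T : Set ℕ, r1 (T ∩ C) = r T ∩ C)
    (hr2 : ∀ T : Set ℕ, r2 (T ∩ D) = r T ∩ D)
    (hS : S ∈ P) (hmax : ¬ ∃ T ∈ P, r S ⊂ r T) :
    S ∩ C ∈ Q1 ∧ ¬ ∃ T ∈ Q1, r1 (S ∩ C) ⊂ r1 T := by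
  have hSC := (hsplit S).1 hS
  refine ⟨hSC.1, ?_⟩
  rintro ⟨T, hT, hss⟩
  apply hmax
  set U := T ∪ S ∩ D with hUdef
  have hT1 : T ⊆ C := hsub1 T hT
  have hUC : U ∩ C = T := union_inter_eq_left hdisj hT1 Set.inter_subset_right
  have hUD : U ∩ D = S ∩ D := union_inter_eq_right hdisj hT1 Set.inter_subset_right
  have hUP : U ∈ P := (hsplit U).2 ⟨by rw [hUC]; exact hT, by rw [hUD]; exact hSC.2⟩
  refine ⟨U, hUP, ?_⟩
  have hrUC : r U ∩ C = r1 T := by rw [← hr1 U, hUC]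
  have hrUD : r U ∩ D = r S ∩ D := by rw [← hr2 U, hUD, hr2 S]
  have hsub : r S ⊆ r U := by
    intro x hx
    have hx2 : x ∈ r S ∩ C ∪ r S ∩ D := by rw [inter_piece huniv]; exact hx
    rcases hx2 with h | h
    · have hx3 : x ∈ r1 (S ∩ C) := by rw [hr1 S]; exact h
      have hx4 : x ∈ r U ∩ C := by rw [hrUC]; exact hss.subset hx3
      exact hx4.1
    · have hx4 : x ∈ r U ∩ D := by rw [hrUD]; exact h
      exact hx4.1
  obtain ⟨x, hxT, hxS⟩ := Set.exists_of_ssubset hss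
  have hxUC : x ∈ r U ∩ C := by rw [hrUC]; exact hxT
  have hxrS : x ∉ r S := fun h => hxS (by rw [hr1 S]; exact ⟨h, hxUC.2⟩)
  exact (Set.ssubset_iff_of_subset hsub).2 ⟨x, hxUC.1, hxrS⟩

lemma rngmax_glue {C D : Set ℕ} {P Q1 Q2 : Set (Set ℕ)} {r r1 r2 : Set ℕ → Set ℕ} {S : Set ℕ}
    (huniv : C ∪ D = Set.univ)
    (hsplit : ∀ T : Set ℕ, T ∈ P ↔ T ∩ C ∈ Q1 ∧ T ∩ D ∈ Q2)
    (hr1 : ∀ T : Set ℕ, r1 (T ∩ C) = r T ∩ C)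
    (hr2 : ∀ T : Set ℕ, r2 (T ∩ D) = r T ∩ D)
    (h1 : S ∩ C ∈ Q1 ∧ ¬ ∃ T ∈ Q1, r1 (S ∩ C) ⊂ r1 T)
    (h2 : S ∩ D ∈ Q2 ∧ ¬ ∃ T ∈ Q2, r2 (S ∩ D) ⊂ r2 T) :
    S ∈ P ∧ ¬ ∃ T ∈ P, r S ⊂ r T := by
  refine ⟨(hsplit S).2 ⟨h1.1, h2.1⟩, ?_⟩
  rintro ⟨T, hT, hss⟩
  obtain ⟨x, hxT, hxS⟩ := Set.exists_of_ssubset hss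
  have hTp := (hsplit T).1 hT
  have hx : x ∈ C ∪ D := by rw [huniv]; exact Set.mem_univ x
  rcases hx with hxC | hxD
  · apply h1.2
    refine ⟨T ∩ C, hTp.1, ?_⟩
    rw [hr1 S, hr1 T]
    refine (Set.ssubset_iff_of_subset (Set.inter_subset_inter_left C hss.subset)).2
      ⟨x, ⟨hxT, hxC⟩, fun h => hxS h.1⟩
  · apply h2.2
    refine ⟨T ∩ D, hTp.2, ?_⟩
    rw [hr2 S, hr2 T]
    refine (Set.ssubset_iff_of_subset (Set.inter_subset_inter_left D hss.subset)).2
      ⟨x, ⟨hxT, hxD⟩, fun h => hxS h.1⟩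

lemma ncard_of_split {C D : Set ℕ} {P Q1 Q2 : Set (Set ℕ)}
    (huniv : C ∪ D = Set.univ) (hdisj : C ∩ D = ∅)
    (hsplit : ∀ T : Set ℕ, T ∈ P ↔ T ∩ C ∈ Q1 ∧ T ∩ D ∈ Q2)
    (hsub1 : ∀ T ∈ Q1, T ⊆ C) (hsub2 : ∀ T ∈ Q2, T ⊆ D) :
    P.ncard = Q1.ncard * Q2.ncard := by
  have e : P ≃ Q1 × Q2 :=
    { toFun := fun S => ⟨⟨S.1 ∩ C, ((hsplit S.1).1 S.2).1⟩, ⟨S.1 ∩ D, ((hsplit S.1).1 S.2).2⟩⟩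
      invFun := fun T => ⟨T.1.1 ∪ T.2.1, (hsplit _).2
        ⟨by rw [union_inter_eq_left hdisj (hsub1 _ T.1.2) (hsub2 _ T.2.2)]; exact T.1.2,
         by rw [union_inter_eq_right hdisj (hsub1 _ T.1.2) (hsub2 _ T.2.2)]; exact T.2.2⟩⟩
      left_inv := fun S => Subtype.ext (inter_piece huniv S.1)
      right_inv := fun T => by
        refine Prod.ext (Subtype.ext ?_) (Subtype.ext ?_)
        · exact union_inter_eq_left hdisj (hsub1 _ T.1.2) (hsub2 _ T.2.2)
        · exact union_inter_eq_right hdisj (hsub1 _ T.1.2) (hsub2 _ T.2.2) }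
  rw [← Nat.card_coe_set_eq, ← Nat.card_coe_set_eq, ← Nat.card_coe_set_eq,
    Nat.card_congr e, Nat.card_prod]

end AuxGeneric

section AuxPartition
open AF Set

lemma AF_ext {F G : AF} (hA : F.A = G.A) (hR : F.R = G.R) : F = G := by
  cases F; cases G
  cases hA; cases hR
  rfl

lemma restrict_restrict {F : AF} {C D : Set ℕ} (h : ∀ x ∈ D, x ∉ C) :
    restrictAF (restrictAF F Cᶜ) D = restrictAF F D := by
  apply AF_ext
  · ext a
    simp only [restrictAF, Finset.mem_filter]
    exact ⟨fun ⟨⟨h1, _⟩, h3⟩ => ⟨h1, h3⟩, fun ⟨h1, h3⟩ => ⟨⟨h1, h _ h3⟩, h3⟩⟩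
  · ext p
    constructor
    · rintro ⟨⟨hp, _, _⟩, h1, h2⟩
      exact ⟨hp, h1, h2⟩
    · rintro ⟨hp, h1, h2⟩
      exact ⟨⟨hp, h _ h1, h _ h2⟩, h1, h2⟩

lemma ncard_partition {σ : Semantics}
    (hsp : ∀ (F : AF) (C : Set ℕ), closedIn F C →
      ∀ S : Set ℕ, S ∈ σ F ↔ S ∩ C ∈ σ (restrictAF F C) ∧ S ∩ Cᶜ ∈ σ (restrictAF F Cᶜ))
    (hsub : ∀ G : AF, ∀ S ∈ σ G, S ⊆ ↑G.A)
    (hemp : ∀ G : AF, G.A = ∅ → σ G = {∅}) :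
    ∀ (𝒞 : Finset (Set ℕ)) (F : AF),
      (∀ C ∈ 𝒞, closedIn F C) →
      (∀ C ∈ 𝒞, ∀ D ∈ 𝒞, C ≠ D → C ∩ D = ∅) →
      ((↑F.A : Set ℕ) ⊆ ⋃₀ ↑𝒞) →
      (σ F).ncard = ∏ C ∈ 𝒞, (σ (restrictAF F C)).ncard := by
  intro 𝒞
  classical
  induction 𝒞 using Finset.induction_on with
  | empty =>
    intro F _ _ hcov
    have hA : F.A = ∅ := by
      apply Finset.eq_empty_iff_forall_notMem.2
      intro a ha
      obtain ⟨t, ht, _⟩ := hcov (Finset.mem_coe.2 ha)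
      simp at ht
    rw [hemp F hA]
    simp
  | @insert C s hCs ih =>
    intro F hcl hdisj hcov
    have hCcl : closedIn F C := hcl C (Finset.mem_insert_self C s)
    have hsub1 : ∀ T ∈ σ (restrictAF F C), T ⊆ C := fun T hT x hx =>
      (mem_restrict_A.1 (hsub _ T hT hx)).2
    have hsub2 : ∀ T ∈ σ (restrictAF F Cᶜ), T ⊆ Cᶜ := fun T hT x hx =>
      (mem_restrict_A.1 (hsub _ T hT hx)).2
    have hmain : (σ F).ncard = (σ (restrictAF F C)).ncard * (σ (restrictAF F Cᶜ)).ncard :=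
      ncard_of_split (Set.union_compl_self C) (Set.inter_compl_self C)
        (hsp F C hCcl) hsub1 hsub2
    have hstep : (σ (restrictAF F Cᶜ)).ncard = ∏ D ∈ s, (σ (restrictAF F D)).ncard := by
      have h1 : ∀ D ∈ s, closedIn (restrictAF F Cᶜ) D := fun D hD p hp =>
        hcl D (Finset.mem_insert_of_mem hD) p hp.1
      have h2 : ∀ D ∈ s, ∀ E ∈ s, D ≠ E → D ∩ E = ∅ := fun D hD E hE hne =>
        hdisj D (Finset.mem_insert_of_mem hD) E (Finset.mem_insert_of_mem hE) hne
      have h3 : ((↑(restrictAF F Cᶜ).A : Set ℕ)) ⊆ ⋃₀ ↑s := by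
        intro x hx
        obtain ⟨hxA, hxC⟩ := mem_restrict_A.1 (Finset.mem_coe.1 hx)
        obtain ⟨t, ht, hxt⟩ := hcov (Finset.mem_coe.2 hxA)
        rcases Finset.mem_insert.1 (Finset.mem_coe.1 ht) with rfl | ht'
        · exact absurd hxt hxC
        · exact ⟨t, Finset.mem_coe.2 ht', hxt⟩
      rw [ih (restrictAF F Cᶜ) h1 h2 h3]
      apply Finset.prod_congr rfl
      intro D hD
      have hDC : ∀ x ∈ D, x ∉ C := by
        intro x hxD hxC
        have := hdisj C (Finset.mem_insert_self C s) D (Finset.mem_insert_of_mem hD)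
          (fun h => hCs (h ▸ hD))
        exact (Set.eq_empty_iff_forall_notMem.1 this x) ⟨hxC, hxD⟩
      rw [restrict_restrict hDC]
    rw [Finset.prod_insert hCs, hmain, hstep]

end AuxPartition

section AuxComps
open AF Set

lemma AFStep_symm {F : AF} {a b : ℕ} (h : AFStep F a b) : AFStep F b a := h.symm

lemma sameComp_symm {F : AF} {a b : ℕ} (h : sameComp F a b) : sameComp F b a :=
  (@Relation.ReflTransGen.stdSymm _ (AFStep F) ⟨fun _ _ h' => AFStep_symm h'⟩).symm _ _ h

lemma step_mem {F : AF} {a b : ℕ} (h : AFStep F a b) : a ∈ F.A ∧ b ∈ F.A := by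
  rcases h with h | h
  · exact ⟨(F.R_sub _ h).1, (F.R_sub _ h).2⟩
  · exact ⟨(F.R_sub _ h).2, (F.R_sub _ h).1⟩

def cls (F : AF) (a : ℕ) : Set ℕ := {b ∈ (↑F.A : Set ℕ) | sameComp F a b}

lemma mem_cls {F : AF} {a b : ℕ} : b ∈ cls F a ↔ b ∈ F.A ∧ sameComp F a b := Iff.rfl

lemma cls_sub_A {F : AF} (a : ℕ) : cls F a ⊆ ↑F.A := fun _ h => h.1

lemma cls_closed {F : AF} (a : ℕ) : closedIn F (cls F a) := by
  intro p hp
  constructor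
  · rintro ⟨h1, h2⟩
    exact ⟨(F.R_sub p hp).2, h2.tail (Or.inl hp)⟩
  · rintro ⟨h1, h2⟩
    exact ⟨(F.R_sub p hp).1, h2.tail (Or.inr hp)⟩

lemma cls_eq_of_mem {F : AF} {a b : ℕ} (h : b ∈ cls F a) : cls F a = cls F b := by
  ext x
  constructor
  · rintro ⟨hx, hax⟩
    exact ⟨hx, (sameComp_symm h.2).trans hax⟩
  · rintro ⟨hx, hbx⟩
    exact ⟨hx, h.2.trans hbx⟩

lemma self_mem_cls {F : AF} {a : ℕ} (ha : a ∈ F.A) : a ∈ cls F a :=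
  ⟨ha, Relation.ReflTransGen.refl⟩

end AuxComps

structure NiceSem (σ : Semantics) : Prop where
  split : ∀ (F : AF) (C : Set ℕ), closedIn F C →
    ∀ S : Set ℕ, S ∈ σ F ↔ S ∩ C ∈ σ (restrictAF F C) ∧ S ∩ Cᶜ ∈ σ (restrictAF F Cᶜ)
  subCF : ∀ F : AF, σ F ⊆ F.cf
  empty : ∀ F : AF, F.A = ∅ → σ F = {∅}
  single : ∀ (F : AF) (a : ℕ), F.A = {a} → F.R = ∅ → σ F = {{a}}

section MainLemma
open AF Set

theorem main_of_nice {σ : Semantics} (hN : NiceSem σ) (F : AF) (hcomp : AFCompact σ F)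
    (n : ℕ) (K : Fin n → Set ℕ) (hinj : Function.Injective K)
    (hrange : Set.range K = {C ∈ compsS (σ F) | 2 ≤ C.ncard}) :
    ∃ p : Fin n → ℕ, (∀ i, p i ∈ Pcon σ ((K i).ncard)) ∧ (σ F).ncard = ∏ i, p i := by
  classical
  have hsub : ∀ G : AF, ∀ S ∈ σ G, S ⊆ ↑G.A := fun G S h => (hN.subCF G h).1
  -- arguments of σ F are exactly F.A
  have hAArg : (↑F.A : Set ℕ) = ArgS (σ F) := by
    ext a
    constructor
    · intro ha
      obtain ⟨S, hS, haS⟩ := hcomp a (Finset.mem_coe.1 ha)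
      exact ⟨S, hS, haS⟩
    · rintro ⟨S, hS, haS⟩
      exact hsub F S hS haS
  have hnoself : ∀ a ∈ F.A, (a, a) ∉ F.R := by
    intro a ha h
    have : a ∈ ArgS (σ F) := hAArg ▸ (Finset.mem_coe.2 ha)
    obtain ⟨S, hS, haS⟩ := this
    exact (hN.subCF F hS).2 a haS a haS h
  -- nopairs implies same component
  have nopairs_imp : ∀ a b : ℕ, nopairs (σ F) a b → sameComp F a b := by
    rintro a b ⟨haArg, hbArg, hnp⟩
    by_contra hnc
    obtain ⟨S, hS, haS⟩ := haArg
    obtain ⟨T, hT, hbT⟩ := hbArg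
    have haA : a ∈ F.A := Finset.mem_coe.1 (by rw [hAArg]; exact ⟨S, hS, haS⟩)
    set C := cls F a with hCdef
    have haC : a ∈ C := self_mem_cls haA
    have hbC : b ∉ C := fun h => hnc h.2
    have hCcl : closedIn F C := cls_closed a
    set U := S ∩ C ∪ T ∩ Cᶜ with hUdef
    have hU1 : U ∩ C = S ∩ C :=
      union_inter_eq_left (Set.inter_compl_self C) Set.inter_subset_right Set.inter_subset_right
    have hU2 : U ∩ Cᶜ = T ∩ Cᶜ :=
      union_inter_eq_right (Set.inter_compl_self C) Set.inter_subset_right Set.inter_subset_right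
    have hUσ : U ∈ σ F := (hN.split F C hCcl U).2
      ⟨by rw [hU1]; exact ((hN.split F C hCcl S).1 hS).1,
       by rw [hU2]; exact ((hN.split F C hCcl T).1 hT).2⟩
    exact hnp ⟨U, hUσ, Or.inl ⟨haS, haC⟩, Or.inr ⟨hbT, hbC⟩⟩
  -- steps give nopairs
  have step_nopairs : ∀ a b : ℕ, AFStep F a b → nopairs (σ F) a b := by
    intro a b h
    obtain ⟨haA, hbA⟩ := step_mem h
    refine ⟨hAArg ▸ Finset.mem_coe.2 haA, hAArg ▸ Finset.mem_coe.2 hbA, ?_⟩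
    rintro ⟨S, hS, h1, h2⟩
    rcases h with h | h
    · exact (hN.subCF F hS).2 a h1 b h2 h
    · exact (hN.subCF F hS).2 b h2 a h1 h
  have cls_eq_nopairs : ∀ a ∈ F.A,
      cls F a = {b ∈ ArgS (σ F) | Relation.ReflTransGen (nopairs (σ F)) a b} := by
    intro a _
    ext b
    constructor
    · rintro ⟨hbA, hsc⟩
      refine ⟨hAArg ▸ hbA, ?_⟩
      clear hbA
      induction hsc with
      | refl => exact Relation.ReflTransGen.refl
      | tail h1 h2 ih => exact ih.tail (step_nopairs _ _ h2)
    · rintro ⟨hbArg, hr⟩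
      have hbA : b ∈ (↑F.A : Set ℕ) := by rw [hAArg]; exact hbArg
      refine ⟨hbA, ?_⟩
      clear hbA hbArg
      induction hr with
      | refl => exact Relation.ReflTransGen.refl
      | tail h1 h2 ih => exact ih.trans (nopairs_imp _ _ h2)
  -- the finset of components
  set 𝒞 : Finset (Set ℕ) := F.A.image (cls F) with h𝒞def
  have h𝒞 : ∀ C : Set ℕ, C ∈ 𝒞 ↔ ∃ a ∈ F.A, C = cls F a := by
    intro C
    simp only [h𝒞def, Finset.mem_image]
    constructor
    · rintro ⟨a, ha, rfl⟩; exact ⟨a, ha, rfl⟩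
    · rintro ⟨a, ha, rfl⟩; exact ⟨a, ha, rfl⟩
  have hcompsS : ∀ C : Set ℕ, C ∈ compsS (σ F) ↔ C ∈ 𝒞 := by
    intro C
    rw [h𝒞]
    constructor
    · rintro ⟨a, haArg, rfl⟩
      have haA : a ∈ F.A := Finset.mem_coe.1 (by rw [hAArg]; exact haArg)
      exact ⟨a, haA, (cls_eq_nopairs a haA).symm⟩
    · rintro ⟨a, haA, rfl⟩
      exact ⟨a, hAArg ▸ Finset.mem_coe.2 haA, cls_eq_nopairs a haA⟩
  -- partition properties
  have hcl : ∀ C ∈ 𝒞, closedIn F C := by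
    intro C hC
    obtain ⟨a, _, rfl⟩ := (h𝒞 C).1 hC
    exact cls_closed a
  have hdisj : ∀ C ∈ 𝒞, ∀ D ∈ 𝒞, C ≠ D → C ∩ D = ∅ := by
    intro C hC D hD hne
    obtain ⟨a, _, rfl⟩ := (h𝒞 C).1 hC
    obtain ⟨b, _, rfl⟩ := (h𝒞 D).1 hD
    apply Set.eq_empty_iff_forall_notMem.2
    rintro x ⟨hxC, hxD⟩
    exact hne ((cls_eq_of_mem hxC).trans (cls_eq_of_mem hxD).symm)
  have hcov : (↑F.A : Set ℕ) ⊆ ⋃₀ ↑𝒞 := by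
    intro x hx
    exact ⟨cls F x, Finset.mem_coe.2 ((h𝒞 _).2 ⟨x, Finset.mem_coe.1 hx, rfl⟩),
      self_mem_cls (Finset.mem_coe.1 hx)⟩
  have hprod : (σ F).ncard = ∏ C ∈ 𝒞, (σ (restrictAF F C)).ncard :=
    ncard_partition hN.split hsub hN.empty 𝒞 F hcl hdisj hcov
  -- small components contribute 1
  have hone : ∀ C ∈ 𝒞, ¬ (2 ≤ C.ncard) → (σ (restrictAF F C)).ncard = 1 := by
    intro C hC hsmall
    obtain ⟨a, haA, rfl⟩ := (h𝒞 C).1 hC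
    have haC : a ∈ cls F a := self_mem_cls haA
    have hfin : (cls F a).Finite := Set.Finite.subset (F.A.finite_toSet) (cls_sub_A a)
    have hpos : 0 < (cls F a).ncard := (Set.ncard_pos hfin).2 ⟨a, haC⟩
    have h1 : (cls F a).ncard = 1 := by omega
    obtain ⟨x, hx⟩ := Set.ncard_eq_one.1 h1
    have hxa : cls F a = {a} := by
      rw [hx]
      rw [hx] at haC
      rw [Set.mem_singleton_iff.1 haC]
    have hA1 : (restrictAF F (cls F a)).A = {a} := by
      ext y
      simp only [restrictAF, Finset.mem_filter, hxa, Set.mem_singleton_iff, Finset.mem_singleton]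
      constructor
      · rintro ⟨_, h⟩; exact h
      · rintro rfl; exact ⟨haA, rfl⟩
    have hR1 : (restrictAF F (cls F a)).R = ∅ := by
      apply Set.eq_empty_iff_forall_notMem.2
      rintro p ⟨hp, h1', h2'⟩
      rw [hxa] at h1' h2'
      have hpa : p = (a, a) := Prod.ext h1' h2'
      exact hnoself a haA (hpa ▸ hp)
    rw [hN.single _ a hA1 hR1]
    exact Set.ncard_singleton _
  -- define the factors
  refine ⟨fun i => (σ (restrictAF F (K i))).ncard, ?_, ?_⟩
  · intro i
    have hKmem : K i ∈ {C ∈ compsS (σ F) | 2 ≤ C.ncard} := hrange ▸ Set.mem_range_self i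
    obtain ⟨hKcomp, hKbig⟩ := hKmem
    obtain ⟨a, haA, hKa⟩ := (h𝒞 (K i)).1 ((hcompsS (K i)).1 hKcomp)
    have hKcl : closedIn F (K i) := hKa ▸ cls_closed a
    refine ⟨restrictAF F (K i), ?_, ?_, ?_, rfl⟩
    · -- compact
      intro x hx
      obtain ⟨hxA, hxK⟩ := mem_restrict_A.1 hx
      obtain ⟨S, hS, hxS⟩ := hcomp x hxA
      exact ⟨S ∩ K i, ((hN.split F (K i) hKcl S).1 hS).1, hxS, hxK⟩
    · -- connected
      have hKstep : ∀ x y : ℕ, x ∈ K i → AFStep F x y →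
          y ∈ K i ∧ AFStep (restrictAF F (K i)) x y := by
        intro x y hx hstep
        have hyK : y ∈ K i := by
          rw [hKa] at hx ⊢
          exact ⟨(step_mem hstep).2, hx.2.tail hstep⟩
        constructor
        · exact hyK
        · rcases hstep with h | h
          · exact Or.inl ⟨h, hx, hyK⟩
          · exact Or.inr ⟨h, hyK, hx⟩
      have lift : ∀ x y : ℕ, sameComp F x y → x ∈ K i →
          y ∈ K i ∧ Relation.ReflTransGen (AFStep (restrictAF F (K i))) x y := by
        intro x y h hx
        induction h with
        | refl => exact ⟨hx, Relation.ReflTransGen.refl⟩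
        | tail h1 h2 ih =>
          obtain ⟨hz, hp⟩ := ih
          obtain ⟨hy, hstep⟩ := hKstep _ _ hz h2
          exact ⟨hy, hp.tail hstep⟩
      intro x hx y hy
      have hxK : x ∈ K i := (mem_restrict_A.1 hx).2
      have hyK : y ∈ K i := (mem_restrict_A.1 hy).2
      have hxy : sameComp F x y := by
        rw [hKa] at hxK hyK
        exact (sameComp_symm hxK.2).trans hyK.2
      exact (lift x y hxy hxK).2
    · -- cardinality
      have hcoe : (↑(restrictAF F (K i)).A : Set ℕ) = K i := by
        ext x
        simp only [restrictAF, Finset.coe_filter, Set.mem_setOf_eq, Finset.mem_coe]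
        constructor
        · rintro ⟨_, h⟩; exact h
        · intro h
          refine ⟨?_, h⟩
          have : x ∈ cls F a := hKa ▸ h
          exact this.1
      conv_rhs => rw [← hcoe]
      exact (Set.ncard_coe_finset _).symm
  · -- the product
    rw [hprod]
    rw [← Finset.prod_filter_mul_prod_filter_not 𝒞 (fun C => 2 ≤ C.ncard)]
    have h2 : ∏ C ∈ 𝒞.filter (fun C => ¬ 2 ≤ C.ncard), (σ (restrictAF F C)).ncard = 1 := by
      apply Finset.prod_eq_one
      intro C hC
      obtain ⟨hC1, hC2⟩ := Finset.mem_filter.1 hC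
      exact hone C hC1 hC2
    rw [h2, mul_one]
    symm
    apply Finset.prod_bij (fun (i : Fin n) (_ : i ∈ Finset.univ) => K i)
    · intro i _
      have hKmem : K i ∈ {C ∈ compsS (σ F) | 2 ≤ C.ncard} := hrange ▸ Set.mem_range_self i
      exact Finset.mem_filter.2 ⟨(hcompsS (K i)).1 hKmem.1, hKmem.2⟩
    · intro i _ j _ h
      exact hinj h
    · intro C hC
      obtain ⟨hC1, hC2⟩ := Finset.mem_filter.1 hC
      have : C ∈ Set.range K := by
        rw [hrange]
        exact ⟨(hcompsS C).2 hC1, hC2⟩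
      obtain ⟨i, hi⟩ := this
      exact ⟨i, Finset.mem_univ i, hi⟩
    · intro i _
      rfl

end MainLemma

section Degenerate
open AF Set

lemma A_empty_R {G : AF} (h : G.A = ∅) : G.R = ∅ :=
  Set.eq_empty_iff_forall_notMem.2 fun p hp => by
    have := (G.R_sub p hp).1
    rw [h] at this
    exact absurd this (Finset.notMem_empty _)

lemma cf_empty {G : AF} (h : G.A = ∅) : G.cf = {∅} := by
  ext S
  simp only [AF.cf, Set.mem_setOf_eq, Set.mem_singleton_iff, h, Finset.coe_empty]
  constructor
  · rintro ⟨h1, _⟩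
    exact Set.subset_empty_iff.1 h1
  · rintro rfl
    exact ⟨subset_refl _, by simp⟩

lemma cf_single {G : AF} {a : ℕ} (hA : G.A = {a}) (hR : G.R = ∅) :
    G.cf = {S | S ⊆ {a}} := by
  ext S
  simp only [AF.cf, Set.mem_setOf_eq, hA, hR, Finset.coe_singleton,
    Set.mem_empty_iff_false]
  constructor
  · exact fun h => h.1
  · exact fun h => ⟨h, by simp⟩

lemma adm_eq_cf {G : AF} (hR : G.R = ∅) : G.adm = G.cf := by
  ext S
  simp only [AF.adm, AF.defends, hR, Set.mem_setOf_eq, Set.mem_empty_iff_false]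
  constructor
  · exact fun h => h.1
  · exact fun h => ⟨h, by simp⟩

lemma rng_R_empty {G : AF} (hR : G.R = ∅) (S : Set ℕ) : G.rng S = S := by
  simp [AF.rng, hR]

lemma naive_empty (G : AF) (h : G.A = ∅) : G.naive = {∅} := by
  ext S
  simp only [AF.naive, Set.mem_setOf_eq, cf_empty h, Set.mem_singleton_iff]
  constructor
  · exact fun h' => h'.1
  · rintro rfl
    exact ⟨rfl, fun T hT _ => hT.symm⟩

lemma naive_single (G : AF) (a : ℕ) (hA : G.A = {a}) (hR : G.R = ∅) :
    G.naive = {{a}} := by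
  ext S
  simp only [AF.naive, Set.mem_setOf_eq, cf_single hA hR, Set.mem_singleton_iff]
  constructor
  · rintro ⟨h1, h2⟩
    exact h2 {a} (subset_refl _) h1
  · rintro rfl
    exact ⟨subset_refl _, fun T hT h => Set.Subset.antisymm h hT⟩

lemma pref_empty (G : AF) (h : G.A = ∅) : G.pref = {∅} := by
  ext S
  simp only [AF.pref, Set.mem_setOf_eq, adm_eq_cf (A_empty_R h), cf_empty h,
    Set.mem_singleton_iff]
  constructor
  · exact fun h' => h'.1
  · rintro rfl
    exact ⟨rfl, fun T hT _ => hT.symm⟩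

lemma pref_single (G : AF) (a : ℕ) (hA : G.A = {a}) (hR : G.R = ∅) :
    G.pref = {{a}} := by
  ext S
  simp only [AF.pref, Set.mem_setOf_eq, adm_eq_cf hR, cf_single hA hR,
    Set.mem_singleton_iff]
  constructor
  · rintro ⟨h1, h2⟩
    exact h2 {a} (subset_refl _) h1
  · rintro rfl
    exact ⟨subset_refl _, fun T hT h => Set.Subset.antisymm h hT⟩

lemma stb_empty (G : AF) (h : G.A = ∅) : G.stb = {∅} := by
  ext S
  simp only [AF.stb, Set.mem_setOf_eq, cf_empty h, Set.mem_singleton_iff, h,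
    Finset.notMem_empty]
  constructor
  · exact fun h' => h'.1
  · rintro rfl
    exact ⟨rfl, by simp⟩

lemma stb_single (G : AF) (a : ℕ) (hA : G.A = {a}) (hR : G.R = ∅) :
    G.stb = {{a}} := by
  ext S
  simp only [AF.stb, Set.mem_setOf_eq, cf_single hA hR, Set.mem_singleton_iff, hA, hR,
    Finset.mem_singleton, Set.mem_empty_iff_false]
  constructor
  · rintro ⟨h1, h2⟩
    rcases Set.subset_singleton_iff_eq.1 h1 with rfl | rfl
    · obtain ⟨s, _, hf⟩ := h2 a rfl (Set.notMem_empty a)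
      exact hf.elim
    · rfl
  · rintro rfl
    refine ⟨subset_refl _, fun b hb hnb => absurd ?_ hnb⟩
    rw [hb]
    exact rfl

lemma stage_empty (G : AF) (h : G.A = ∅) : G.stage = {∅} := by
  ext S
  simp only [AF.stage, Set.mem_setOf_eq, cf_empty h, Set.mem_singleton_iff]
  constructor
  · exact fun h' => h'.1
  · rintro rfl
    refine ⟨rfl, ?_⟩
    rintro ⟨T, rfl, hss⟩
    exact ssubset_irrefl _ hss

lemma stage_single (G : AF) (a : ℕ) (hA : G.A = {a}) (hR : G.R = ∅) :
    G.stage = {{a}} := by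
  have hr := rng_R_empty hR
  ext S
  simp only [AF.stage, Set.mem_setOf_eq, cf_single hA hR, Set.mem_singleton_iff, hr]
  constructor
  · rintro ⟨h1, h2⟩
    rcases Set.subset_singleton_iff_eq.1 h1 with rfl | rfl
    · exact absurd ⟨{a}, subset_refl _, Set.empty_ssubset.2 (Set.singleton_nonempty a)⟩ h2
    · rfl
  · rintro rfl
    refine ⟨subset_refl _, ?_⟩
    rintro ⟨T, hT, hss⟩
    exact hss.ne (Set.Subset.antisymm hss.subset hT)

lemma sem_empty (G : AF) (h : G.A = ∅) : G.sem = {∅} := by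
  ext S
  simp only [AF.sem, Set.mem_setOf_eq, adm_eq_cf (A_empty_R h), cf_empty h,
    Set.mem_singleton_iff]
  constructor
  · exact fun h' => h'.1
  · rintro rfl
    refine ⟨rfl, ?_⟩
    rintro ⟨T, rfl, hss⟩
    exact ssubset_irrefl _ hss

lemma sem_single (G : AF) (a : ℕ) (hA : G.A = {a}) (hR : G.R = ∅) :
    G.sem = {{a}} := by
  have hr := rng_R_empty hR
  ext S
  simp only [AF.sem, Set.mem_setOf_eq, adm_eq_cf hR, cf_single hA hR,
    Set.mem_singleton_iff, hr]
  constructor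
  · rintro ⟨h1, h2⟩
    rcases Set.subset_singleton_iff_eq.1 h1 with rfl | rfl
    · exact absurd ⟨{a}, subset_refl _, Set.empty_ssubset.2 (Set.singleton_nonempty a)⟩ h2
    · rfl
  · rintro rfl
    refine ⟨subset_refl _, ?_⟩
    rintro ⟨T, hT, hss⟩
    exact hss.ne (Set.Subset.antisymm hss.subset hT)

end Degenerate

section Splits
open AF Set

lemma naive_split (F : AF) (C : Set ℕ) (hC : closedIn F C) (S : Set ℕ) :
    S ∈ F.naive ↔ S ∩ C ∈ (restrictAF F C).naive ∧ S ∩ Cᶜ ∈ (restrictAF F Cᶜ).naive := by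
  have hsub1 : ∀ T ∈ (restrictAF F C).cf, T ⊆ C := fun T hT => restrict_cf_sub hT
  have hsub2 : ∀ T ∈ (restrictAF F Cᶜ).cf, T ⊆ Cᶜ := fun T hT => restrict_cf_sub hT
  have hsp := cf_split hC
  have hsp' : ∀ T : Set ℕ,
      T ∈ F.cf ↔ T ∩ Cᶜ ∈ (restrictAF F Cᶜ).cf ∧ T ∩ C ∈ (restrictAF F C).cf :=
    fun T => (hsp T).trans and_comm
  constructor
  · rintro ⟨h1, h2⟩
    exact ⟨max_proj (Set.union_compl_self C) (Set.inter_compl_self C) hsp hsub1 hsub2 h1 h2,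
           max_proj (Set.compl_union_self C) (Set.compl_inter_self C) hsp' hsub2 hsub1 h1 h2⟩
  · rintro ⟨h1, h2⟩
    exact max_glue (Set.union_compl_self C) hsp h1 h2

lemma restrict_adm_sub {F : AF} {C S : Set ℕ} (h : S ∈ (restrictAF F C).adm) : S ⊆ C :=
  restrict_cf_sub h.1

lemma pref_split (F : AF) (C : Set ℕ) (hC : closedIn F C) (S : Set ℕ) :
    S ∈ F.pref ↔ S ∩ C ∈ (restrictAF F C).pref ∧ S ∩ Cᶜ ∈ (restrictAF F Cᶜ).pref := by
  have hsub1 : ∀ T ∈ (restrictAF F C).adm, T ⊆ C := fun T hT => restrict_adm_sub hT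
  have hsub2 : ∀ T ∈ (restrictAF F Cᶜ).adm, T ⊆ Cᶜ := fun T hT => restrict_adm_sub hT
  have hsp := adm_split hC
  have hsp' : ∀ T : Set ℕ,
      T ∈ F.adm ↔ T ∩ Cᶜ ∈ (restrictAF F Cᶜ).adm ∧ T ∩ C ∈ (restrictAF F C).adm :=
    fun T => (hsp T).trans and_comm
  constructor
  · rintro ⟨h1, h2⟩
    exact ⟨max_proj (Set.union_compl_self C) (Set.inter_compl_self C) hsp hsub1 hsub2 h1 h2,
           max_proj (Set.compl_union_self C) (Set.compl_inter_self C) hsp' hsub2 hsub1 h1 h2⟩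
  · rintro ⟨h1, h2⟩
    exact max_glue (Set.union_compl_self C) hsp h1 h2

lemma stage_split (F : AF) (C : Set ℕ) (hC : closedIn F C) (S : Set ℕ) :
    S ∈ F.stage ↔ S ∩ C ∈ (restrictAF F C).stage ∧ S ∩ Cᶜ ∈ (restrictAF F Cᶜ).stage := by
  have hsub1 : ∀ T ∈ (restrictAF F C).cf, T ⊆ C := fun T hT => restrict_cf_sub hT
  have hsub2 : ∀ T ∈ (restrictAF F Cᶜ).cf, T ⊆ Cᶜ := fun T hT => restrict_cf_sub hT
  have hsp := cf_split hC
  have hsp' : ∀ T : Set ℕ,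
      T ∈ F.cf ↔ T ∩ Cᶜ ∈ (restrictAF F Cᶜ).cf ∧ T ∩ C ∈ (restrictAF F C).cf :=
    fun T => (hsp T).trans and_comm
  have hr1 := rng_proj hC
  have hr2 := rng_proj hC.compl
  constructor
  · rintro ⟨h1, h2⟩
    exact ⟨rngmax_proj (Set.union_compl_self C) (Set.inter_compl_self C) hsp hsub1 hsub2
             hr1 hr2 h1 h2,
           rngmax_proj (Set.compl_union_self C) (Set.compl_inter_self C) hsp' hsub2 hsub1
             hr2 hr1 h1 h2⟩
  · rintro ⟨h1, h2⟩
    exact rngmax_glue (Set.union_compl_self C) hsp hr1 hr2 h1 h2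

lemma sem_split (F : AF) (C : Set ℕ) (hC : closedIn F C) (S : Set ℕ) :
    S ∈ F.sem ↔ S ∩ C ∈ (restrictAF F C).sem ∧ S ∩ Cᶜ ∈ (restrictAF F Cᶜ).sem := by
  have hsub1 : ∀ T ∈ (restrictAF F C).adm, T ⊆ C := fun T hT => restrict_adm_sub hT
  have hsub2 : ∀ T ∈ (restrictAF F Cᶜ).adm, T ⊆ Cᶜ := fun T hT => restrict_adm_sub hT
  have hsp := adm_split hC
  have hsp' : ∀ T : Set ℕ,
      T ∈ F.adm ↔ T ∩ Cᶜ ∈ (restrictAF F Cᶜ).adm ∧ T ∩ C ∈ (restrictAF F C).adm :=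
    fun T => (hsp T).trans and_comm
  have hr1 := rng_proj hC
  have hr2 := rng_proj hC.compl
  constructor
  · rintro ⟨h1, h2⟩
    exact ⟨rngmax_proj (Set.union_compl_self C) (Set.inter_compl_self C) hsp hsub1 hsub2
             hr1 hr2 h1 h2,
           rngmax_proj (Set.compl_union_self C) (Set.compl_inter_self C) hsp' hsub2 hsub1
             hr2 hr1 h1 h2⟩
  · rintro ⟨h1, h2⟩
    exact rngmax_glue (Set.union_compl_self C) hsp hr1 hr2 h1 h2

lemma nice_naive : NiceSem AF.naive :=
  ⟨naive_split, fun _ _ h => h.1, naive_empty, naive_single⟩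

lemma nice_stb : NiceSem AF.stb :=
  ⟨fun F C hC S => stb_split hC S, fun _ _ h => h.1, stb_empty, stb_single⟩

lemma nice_stage : NiceSem AF.stage :=
  ⟨stage_split, fun _ _ h => h.1, stage_empty, stage_single⟩

lemma nice_pref : NiceSem AF.pref :=
  ⟨pref_split, fun _ _ h => h.1.1, pref_empty, pref_single⟩

lemma nice_sem : NiceSem AF.sem :=
  ⟨sem_split, fun _ _ h => h.1.1, sem_empty, sem_single⟩

lemma nice_standard {σ : Semantics} (h : σ ∈ StandardSemantics) : NiceSem σ := by
  simp only [StandardSemantics, Set.mem_insert_iff, Set.mem_singleton_iff] at h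
  rcases h with rfl | rfl | rfl | rfl | rfl
  exacts [nice_naive, nice_stb, nice_stage, nice_pref, nice_sem]

end Splits
theorem extension_count_product_of_components (σ : Semantics)
    (hσ : σ ∈ StandardSemantics) (𝕊 : Set (Set ℕ)) (hext : IsExtensionSet 𝕊)
    (F : AF) (hcomp : AFCompact σ F) (hσF : σ F = 𝕊)
    (n : ℕ) (K : Fin n → Set ℕ) (hinj : Function.Injective K)
    (hrange : Set.range K = {C ∈ compsS 𝕊 | 2 ≤ C.ncard}) :
    ∃ p : Fin n → ℕ, (∀ i, p i ∈ Pcon σ ((K i).ncard)) ∧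
      𝕊.ncard = ∏ i, p i := by
  subst hσF
  exact main_of_nice (nice_standard hσ) F hcomp n K hinj hrange
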